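/- Syn is sound and complete with respect to proper δ-models: a formula φ is derivable in Syn if and only if 𝓜,w ⊨ φ for every proper δ-model 𝓜 = (W,∼,V) and every w ∈ W. -/

import Mathlib

/-- An agent pattern: a set of nonempty subsets of the agent set. -/
abbrev Pat (Ag : Type*) := {G : Finset (Finset Ag) // (∅ : Finset Ag) ∉ G}

variable {Ag : Type*} [DecidableEq Ag]

/-- Union of agent patterns. -/
def Pat.union (G H : Pat Ag) : Pat Ag :=
  ⟨G.1 ∪ H.1, by
    intro hmem
    rcases Finset.mem_union.mp hmem with h | h
    · exact G.2 h
    · exact H.2 h⟩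

/-- `G ∪ {B}` for a nonempty `B ⊆ Ag`. -/
def Pat.ins (B : Finset Ag) (hB : B ≠ ∅) (G : Pat Ag) : Pat Ag :=
  ⟨insert B G.1, by
    intro hmem
    rcases Finset.mem_insert.mp hmem with h | h
    · exact hB h.symm
    · exact G.2 h⟩

/-- The singleton agent pattern `{A}` for a nonempty `A ⊆ Ag`. -/
def Pat.single (A : Finset Ag) (hA : A ≠ ∅) : Pat Ag :=
  ⟨{A}, fun hmem => hA (Finset.mem_singleton.mp hmem).symm⟩

/-- Formulas of the language of synergistic knowledge: atomic propositions,
negation, conjunction, and a modality `[G]` for each agent pattern `G`. -/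
inductive Form (Ag P : Type*) : Type _ where
  | atom : P → Form Ag P
  | neg : Form Ag P → Form Ag P
  | and : Form Ag P → Form Ag P → Form Ag P
  | box : Pat Ag → Form Ag P → Form Ag P

namespace Form

variable {P : Type*}

/-- Material implication, `φ → ψ := ¬(φ ∧ ¬ψ)`. -/
def impl (φ ψ : Form Ag P) : Form Ag P := neg (and φ (neg ψ))

/-- `⊥ := p₀ ∧ ¬p₀` for a fixed atomic proposition `p₀`. -/
def falsum (p₀ : P) : Form Ag P := and (atom p₀) (neg (atom p₀))

/-- `alive(G) := ¬[G]⊥`. -/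
def aliveF (p₀ : P) (G : Pat Ag) : Form Ag P := neg (box G (falsum p₀))

/-- Finite conjunction of a list of formulas (empty conjunction is `⊤ = ¬⊥`). -/
def conjList (p₀ : P) : List (Form Ag P) → Form Ag P
  | [] => neg (falsum p₀)
  | φ :: l => and φ (conjList p₀ l)

/-- Finite disjunction of a list of formulas (empty disjunction is `⊥`). -/
def disjList (p₀ : P) : List (Form Ag P) → Form Ag P
  | [] => falsum p₀
  | φ :: l => neg (and (neg φ) (neg (disjList p₀ l)))

end Form

/-- `G^C := {H ∈ 𝒫(Ag)\{∅} | no B ∈ G has H ⊆ B}`, the complement pattern. -/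
def patC [Fintype Ag] (G : Pat Ag) : Pat Ag :=
  ⟨Finset.univ.filter fun H => H ≠ ∅ ∧ ∀ B ∈ G.1, ¬ H ⊆ B, by
    intro hmem
    exact ((Finset.mem_filter.mp hmem).2).1 rfl⟩

/-- `dead(G) := ⋀_{B ∈ G} ¬ alive({B})`. -/
noncomputable def deadF {P : Type*} (p₀ : P) (G : Pat Ag) : Form Ag P :=
  Form.conjList p₀ (G.1.attach.toList.map fun B =>
    Form.neg (Form.aliveF p₀ (Pat.single B.1 fun he => G.2 (by simpa [he] using B.2))))

/-- `NE := ⋁_{G ⊆ 𝒫(Ag)\{∅}} alive(G)`, the disjunction over all agent patterns. -/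
noncomputable def neF {P : Type*} [Fintype Ag] (p₀ : P) : Form Ag P :=
  Form.disjList p₀ (((Finset.univ : Finset (Pat Ag)).toList).map (Form.aliveF p₀))

/-- Propositional evaluation of a formula, treating boxed formulas as atoms. -/
def pEval {P : Type*} (v : Form Ag P → Prop) : Form Ag P → Prop
  | .atom p => v (.atom p)
  | .neg φ => ¬ pEval v φ
  | .and φ ψ => pEval v φ ∧ pEval v ψ
  | .box G φ => v (.box G φ)

/-- A propositional tautology: true under every propositional evaluation. -/
def Tautology {P : Type*} (φ : Form Ag P) : Prop := ∀ v, pEval v φ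

/-- A pre-model: a symmetric and transitive relation for each agent pattern,
together with a valuation. -/
structure PreModel (Ag W P : Type*) where
  rel : Pat Ag → W → W → Prop
  symm : ∀ G, Symmetric (rel G)
  trans : ∀ G, Transitive (rel G)
  val : W → Set P

/-- Truth in a pre-model. -/
def KSat {W P : Type*} (M : PreModel Ag W P) : Form Ag P → W → Prop
  | .atom p, w => p ∈ M.val w
  | .neg φ, w => ¬ KSat M φ w
  | .and φ ψ, w => KSat M φ w ∧ KSat M ψ w
  | .box G φ, w => ∀ v, M.rel G w v → KSat M φ v

/-- κ-models: pre-models satisfying (K1)–(K4) and (NE). -/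
structure IsKappa {W P : Type*} (M : PreModel Ag W P) : Prop where
  k1 : ∀ G H w, M.rel G w w → M.rel H w w → M.rel (Pat.union G H) w w
  k2 : ∀ (G : Pat Ag) (A B : Finset Ag) (hAB : A ∪ B ≠ ∅) w, A ∈ G.1 → B ∈ G.1 →
      M.rel G w w → M.rel (Pat.single (A ∪ B) hAB) w w
  k3 : ∀ G H : Pat Ag, G.1 ⊆ H.1 → ∀ w v, M.rel H w v → M.rel G w v
  k4 : ∀ (G : Pat Ag) (B : Finset Ag) (hB : B ≠ ∅), (∃ A ∈ G.1, B ⊆ A) → ∀ w v,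
      M.rel G w v → M.rel (Pat.ins B hB G) w v
  ne : ∀ w, ∃ G, M.rel G w w

/-- The axiom system `Syn⁻` (the system `Syn` without axiom (P)). -/
inductive SynMinusD {P : Type*} [Fintype Ag] (p₀ : P) : Form Ag P → Prop where
  | taut {φ} : Tautology φ → SynMinusD p₀ φ
  | axK (G : Pat Ag) (φ ψ) :
      SynMinusD p₀ (.impl (.box G (.impl φ ψ)) (.impl (.box G φ) (.box G ψ)))
  | axB (G : Pat Ag) (φ) :
      SynMinusD p₀ (.impl φ (.box G (.neg (.box G (.neg φ)))))
  | ax4 (G : Pat Ag) (φ) :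
      SynMinusD p₀ (.impl (.box G φ) (.box G (.box G φ)))
  | axT (G : Pat Ag) (φ) :
      SynMinusD p₀ (.impl (Form.aliveF p₀ G) (.impl (.box G φ) φ))
  | axNE : SynMinusD p₀ (neF p₀)
  | axMono {G H : Pat Ag} (φ) : G.1 ⊆ H.1 →
      SynMinusD p₀ (.impl (.box G φ) (.box H φ))
  | axEquiv {G : Pat Ag} {B : Finset Ag} (hB : B ≠ ∅) (φ) : (∃ A ∈ G.1, B ⊆ A) →
      SynMinusD p₀ (.impl (.box (Pat.ins B hB G) φ) (.box G φ))
  | axUnion (G H : Pat Ag) :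
      SynMinusD p₀ (.impl (.and (Form.aliveF p₀ G) (Form.aliveF p₀ H))
        (Form.aliveF p₀ (Pat.union G H)))
  | axClo {G : Pat Ag} {A B : Finset Ag} (hAB : A ∪ B ≠ ∅) : A ∈ G.1 → B ∈ G.1 →
      SynMinusD p₀ (.impl (Form.aliveF p₀ G) (Form.aliveF p₀ (Pat.single (A ∪ B) hAB)))
  | mp {φ ψ} : SynMinusD p₀ (.impl φ ψ) → SynMinusD p₀ φ → SynMinusD p₀ ψ
  | nec (G : Pat Ag) {φ} : SynMinusD p₀ φ → SynMinusD p₀ (.box G φ)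

/-- The axiom system `Syn`: `Syn⁻` together with axiom (P). -/
inductive SynD {Ag P : Type*} [DecidableEq Ag] [Fintype Ag] (p₀ : P) : Form Ag P → Prop where
  | taut {φ} : Tautology φ → SynD p₀ φ
  | axK (G : Pat Ag) (φ ψ) :
      SynD p₀ (.impl (.box G (.impl φ ψ)) (.impl (.box G φ) (.box G ψ)))
  | axB (G : Pat Ag) (φ) :
      SynD p₀ (.impl φ (.box G (.neg (.box G (.neg φ)))))
  | ax4 (G : Pat Ag) (φ) :
      SynD p₀ (.impl (.box G φ) (.box G (.box G φ)))
  | axT (G : Pat Ag) (φ) :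
      SynD p₀ (.impl (Form.aliveF p₀ G) (.impl (.box G φ) φ))
  | axP (G : Pat Ag) (φ) :
      SynD p₀ (.impl
        (.and (Form.aliveF p₀ G) (.and (deadF p₀ (patC G)) φ))
        (.box G (.impl (deadF p₀ (patC G)) φ)))
  | axNE : SynD p₀ (neF p₀)
  | axMono {G H : Pat Ag} (φ) : G.1 ⊆ H.1 →
      SynD p₀ (.impl (.box G φ) (.box H φ))
  | axEquiv {G : Pat Ag} {B : Finset Ag} (hB : B ≠ ∅) (φ) : (∃ A ∈ G.1, B ⊆ A) →
      SynD p₀ (.impl (.box (Pat.ins B hB G) φ) (.box G φ))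
  | axUnion (G H : Pat Ag) :
      SynD p₀ (.impl (.and (Form.aliveF p₀ G) (Form.aliveF p₀ H))
        (Form.aliveF p₀ (Pat.union G H)))
  | axClo {G : Pat Ag} {A B : Finset Ag} (hAB : A ∪ B ≠ ∅) : A ∈ G.1 → B ∈ G.1 →
      SynD p₀ (.impl (Form.aliveF p₀ G) (Form.aliveF p₀ (Pat.single (A ∪ B) hAB)))
  | mp {φ ψ} : SynD p₀ (.impl φ ψ) → SynD p₀ φ → SynD p₀ ψ
  | nec (G : Pat Ag) {φ} : SynD p₀ φ → SynD p₀ (.box G φ)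

/-- δ-models: pre-models satisfying (K2), (K3), (K4), (NE) and the standard
group knowledge property (D). -/
structure IsDelta {Ag W P : Type*} [DecidableEq Ag] (M : PreModel Ag W P) : Prop where
  k2 : ∀ (G : Pat Ag) (A B : Finset Ag) (hAB : A ∪ B ≠ ∅) w, A ∈ G.1 → B ∈ G.1 →
      M.rel G w w → M.rel (Pat.single (A ∪ B) hAB) w w
  k3 : ∀ G H : Pat Ag, G.1 ⊆ H.1 → ∀ w v, M.rel H w v → M.rel G w v
  k4 : ∀ (G : Pat Ag) (B : Finset Ag) (hB : B ≠ ∅), (∃ A ∈ G.1, B ⊆ A) → ∀ w v,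
      M.rel G w v → M.rel (Pat.ins B hB G) w v
  ne : ∀ w, ∃ G, M.rel G w w
  d : ∀ (G : Pat Ag) (w v), M.rel G w v ↔
      ∀ (B : Finset Ag) (hB : B ∈ G.1),
        M.rel (Pat.single B fun he => G.2 (by simpa [he] using hB)) w v

-- `w̄ = {B | ∃ G, B ∈ G and w ∈ alive(G)}`.
open Classical in
noncomputable def wbar {Ag W P : Type*} [DecidableEq Ag] [Fintype Ag]
    (M : PreModel Ag W P) (w : W) : Pat Ag :=
  ⟨Finset.univ.filter fun B => ∃ G : Pat Ag, B ∈ G.1 ∧ M.rel G w w, by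
    intro hmem
    obtain ⟨G, hB, -⟩ := (Finset.mem_filter.mp hmem).2
    exact G.2 hB⟩

/-- `w ≡ v` iff `w̄ = v̄` and `w ∼_{w̄} v`. -/
noncomputable def EquivW {Ag W P : Type*} [DecidableEq Ag] [Fintype Ag]
    (M : PreModel Ag W P) (w v : W) : Prop :=
  wbar M w = wbar M v ∧ M.rel (wbar M w) w v

/-- A pre-model is proper iff `w ≡ v` implies `w = v`. -/
noncomputable def Proper {Ag W P : Type*} [DecidableEq Ag] [Fintype Ag]
    (M : PreModel Ag W P) : Prop :=
  ∀ w v, EquivW M w v → w = v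

set_option linter.unusedSectionVars false
namespace SynProof
open Form

variable {Ag P W : Type} [DecidableEq Ag] [Fintype Ag] {p₀ : P}

/-! ### pEval lemmas -/

lemma pEval_impl {v} {φ ψ : Form Ag P} : pEval v (φ.impl ψ) ↔ (pEval v φ → pEval v ψ) := by
  simp only [Form.impl, pEval]; tauto

lemma pEval_falsum {v} : pEval v (falsum p₀ : Form Ag P) ↔ False := by
  simp [falsum, pEval]

lemma pEval_conjList {v} : ∀ l : List (Form Ag P), pEval v (conjList p₀ l) ↔ ∀ ψ ∈ l, pEval v ψ
  | [] => by simp [conjList, pEval, pEval_falsum]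
  | φ :: l => by simp [conjList, pEval, pEval_conjList l]

lemma pEval_disjList {v} : ∀ l : List (Form Ag P), pEval v (disjList p₀ l) ↔ ∃ ψ ∈ l, pEval v ψ
  | [] => by simp [disjList, pEval_falsum]
  | φ :: l => by
    simp only [disjList, pEval, pEval_disjList l, List.mem_cons, not_and_or, not_not]
    constructor
    · rintro (h | ⟨ψ, h1, h2⟩)
      · exact ⟨φ, Or.inl rfl, h⟩
      · exact ⟨ψ, Or.inr h1, h2⟩
    · rintro ⟨ψ, (rfl | h1), h2⟩
      · exact Or.inl h2
      · exact Or.inr ⟨ψ, h1, h2⟩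

/-! ### KSat lemmas -/

variable {M : PreModel Ag W P}

lemma ksat_impl {φ ψ : Form Ag P} {w : W} :
    KSat M (φ.impl ψ) w ↔ (KSat M φ w → KSat M ψ w) := by
  simp only [Form.impl, KSat]; tauto

lemma ksat_falsum {w : W} : ¬ KSat M (falsum p₀) w := by
  simp [falsum, KSat]

lemma ksat_conjList {w : W} : ∀ {l : List (Form Ag P)},
    KSat M (conjList p₀ l) w ↔ ∀ ψ ∈ l, KSat M ψ w
  | [] => by simp [conjList, KSat, ksat_falsum (p₀ := p₀)]
  | φ :: l => by simp [conjList, KSat, ksat_conjList (l := l)]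

lemma ksat_disjList {w : W} : ∀ {l : List (Form Ag P)},
    KSat M (disjList p₀ l) w ↔ ∃ ψ ∈ l, KSat M ψ w
  | [] => by simp [disjList, ksat_falsum (p₀ := p₀)]
  | φ :: l => by
    simp only [disjList, KSat, ksat_disjList (l := l), List.mem_cons, not_and_or, not_not]
    constructor
    · rintro (h | ⟨ψ, h1, h2⟩)
      · exact ⟨φ, Or.inl rfl, h⟩
      · exact ⟨ψ, Or.inr h1, h2⟩
    · rintro ⟨ψ, (rfl | h1), h2⟩
      · exact Or.inl h2
      · exact Or.inr ⟨ψ, h1, h2⟩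

lemma ksat_alive {G : Pat Ag} {w : W} :
    KSat M (aliveF p₀ G) w ↔ ∃ v, M.rel G w v := by
  simp only [aliveF, KSat]
  constructor
  · intro h
    by_contra hc
    push_neg at hc
    exact h (fun v hv => absurd hv (hc v))
  · rintro ⟨v, hv⟩ h
    exact ksat_falsum (h v hv)

lemma rel_refl_of_rel {G : Pat Ag} {w v : W} (h : M.rel G w v) : M.rel G w w :=
  M.trans G h (M.symm G h)

lemma ksat_alive_refl {G : Pat Ag} {w : W} :
    KSat M (aliveF p₀ G) w ↔ M.rel G w w := by
  rw [ksat_alive]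
  exact ⟨fun ⟨v, hv⟩ => rel_refl_of_rel hv, fun h => ⟨w, h⟩⟩

lemma ksat_dead {G : Pat Ag} {w : W} :
    KSat M (deadF p₀ G) w ↔ ∀ B (hB : B ∈ G.1),
      ¬ M.rel (Pat.single B fun he => G.2 (by simpa [he] using hB)) w w := by
  rw [deadF, ksat_conjList]
  constructor
  · intro h B hB hrel
    have hmem : (Form.neg (Form.aliveF p₀ (Pat.single B fun he => G.2 (by simpa [he] using hB)))) ∈
        (G.1.attach.toList.map fun B' =>
          Form.neg (Form.aliveF p₀ (Pat.single B'.1 fun he => G.2 (by simpa [he] using B'.2)))) := by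
      refine List.mem_map.mpr ⟨⟨B, hB⟩, ?_, rfl⟩
      simp [Finset.mem_toList]
    exact (h _ hmem) (ksat_alive_refl.mpr hrel)
  · intro h ψ hψ
    rcases List.mem_map.mp hψ with ⟨⟨B, hB⟩, -, rfl⟩
    intro halive
    exact h B hB (ksat_alive_refl.mp halive)

lemma pEval_ksat {w : W} : ∀ {φ : Form Ag P}, pEval (fun ψ => KSat M ψ w) φ ↔ KSat M φ w
  | .atom p => Iff.rfl
  | .neg φ => by simp only [pEval, KSat]; rw [pEval_ksat]
  | .and φ ψ => by simp only [pEval, KSat]; rw [pEval_ksat, pEval_ksat]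
  | .box G φ => Iff.rfl

lemma wbar_mem_iff (hM : IsDelta M) {w : W} {B : Finset Ag} :
    B ∈ (wbar M w).1 ↔ ∃ h : B ≠ ∅, M.rel (Pat.single B h) w w := by
  classical
  unfold wbar
  rw [Finset.mem_filter]
  simp only [Finset.mem_univ, true_and]
  constructor
  · rintro ⟨G, hB, hrel⟩
    have hne : B ≠ ∅ := fun he => G.2 (he ▸ hB)
    exact ⟨hne, (hM.d G w w).mp hrel B hB⟩
  · rintro ⟨h, hrel⟩
    exact ⟨Pat.single B h, Finset.mem_singleton_self B, hrel⟩


/-! ### Soundness -/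

lemma single_subset_ins {G : Pat Ag} {B : Finset Ag} {hB : B ≠ ∅} :
    (Pat.single B hB).1 ⊆ (Pat.ins B hB G).1 := by
  intro x hx
  simp only [Pat.single, Finset.mem_singleton] at hx
  simp only [Pat.ins, Finset.mem_insert]
  exact Or.inl hx

theorem soundness {φ : Form Ag P} (h : SynD p₀ φ) :
    ∀ {W : Type} (M : PreModel Ag W P), IsDelta M → Proper M → ∀ w, KSat M φ w := by
  induction h with
  | @taut φ ht =>
    intro W M hM hP w
    exact pEval_ksat.mp (ht _)
  | axK G φ ψ =>
    intro W M hM hP w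
    rw [ksat_impl, ksat_impl]
    intro h1 h2 v hrel
    exact ksat_impl.mp (h1 v hrel) (h2 v hrel)
  | axB G φ =>
    intro W M hM hP w
    rw [ksat_impl]
    intro h1 v hrel hbox
    exact (hbox w (M.symm G hrel)) h1
  | ax4 G φ =>
    intro W M hM hP w
    rw [ksat_impl]
    intro h1 v hrel u hrel'
    exact h1 u (M.trans G hrel hrel')
  | axT G φ =>
    intro W M hM hP w
    rw [ksat_impl, ksat_impl]
    intro ha hbox
    exact hbox w (ksat_alive_refl.mp ha)
  | axP G φ =>
    intro W M hM hP w
    rw [ksat_impl]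
    rintro ⟨ha, hd, hφ⟩ v hrel
    rw [ksat_impl]
    intro hdv
    -- key step lemma
    have step : ∀ (x y : W), M.rel G x y → KSat M (deadF p₀ (patC G)) x →
        ∀ (B : Finset Ag) (h : B ≠ ∅), M.rel (Pat.single B h) x x → M.rel (Pat.single B h) x y := by
      intro x y hxy hdx B hBne hBxx
      have hBnotC : B ∉ (patC G).1 := by
        intro hBC
        exact (ksat_dead.mp hdx) B hBC hBxx
      have hcov : ∃ A ∈ G.1, B ⊆ A := by
        by_contra hc
        push_neg at hc
        refine hBnotC ?_
        unfold patC
        rw [Finset.mem_filter]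
        exact ⟨Finset.mem_univ _, hBne, hc⟩
      have h1 : M.rel (Pat.ins B hBne G) x y := hM.k4 G B hBne hcov x y hxy
      exact hM.k3 (Pat.single B hBne) (Pat.ins B hBne G) single_subset_ins x y h1
    have hdw : KSat M (deadF p₀ (patC G)) w := hd
    have hrelvw : M.rel G v w := M.symm G hrel
    have hwv_single : ∀ (B : Finset Ag) (h : B ≠ ∅),
        M.rel (Pat.single B h) w w → M.rel (Pat.single B h) w v := fun B h hB =>
      step w v hrel hdw B h hB
    have hvw_single : ∀ (B : Finset Ag) (h : B ≠ ∅),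
        M.rel (Pat.single B h) v v → M.rel (Pat.single B h) v w := fun B h hB =>
      step v w hrelvw hdv B h hB
    have hbarsub : wbar M w = wbar M v := by
      apply Subtype.ext
      apply Finset.ext
      intro B
      rw [show ((wbar M w).1 = (wbar M w).1) from rfl]
      constructor
      · intro hB
        rcases (wbar_mem_iff hM).mp hB with ⟨hne, hrelB⟩
        have := hwv_single B hne hrelB
        exact (wbar_mem_iff hM).mpr ⟨hne, rel_refl_of_rel (M.symm _ this)⟩
      · intro hB
        rcases (wbar_mem_iff hM).mp hB with ⟨hne, hrelB⟩
        have := hvw_single B hne hrelB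
        exact (wbar_mem_iff hM).mpr ⟨hne, rel_refl_of_rel (M.symm _ this)⟩
    have hrelbar : M.rel (wbar M w) w v := by
      rw [hM.d]
      intro B hB
      have hne : B ≠ ∅ := fun he => (wbar M w).2 (he ▸ hB)
      rcases (wbar_mem_iff hM).mp hB with ⟨hne', hrelB⟩
      exact hwv_single B _ hrelB
    have : w = v := hP w v ⟨hbarsub, hrelbar⟩
    exact this ▸ hφ
  | axNE =>
    intro W M hM hP w
    rcases hM.ne w with ⟨G, hG⟩
    rw [neF, ksat_disjList]
    refine ⟨Form.aliveF p₀ G, List.mem_map.mpr ⟨G, ?_, rfl⟩, ksat_alive.mpr ⟨w, hG⟩⟩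
    rw [Finset.mem_toList]
    exact Finset.mem_univ G
  | @axMono G H φ hGH =>
    intro W M hM hP w
    rw [ksat_impl]
    intro h1 v hrel
    exact h1 v (hM.k3 G H hGH w v hrel)
  | @axEquiv G B hB φ hex =>
    intro W M hM hP w
    rw [ksat_impl]
    intro h1 v hrel
    exact h1 v (hM.k4 G B hB hex w v hrel)
  | axUnion G H =>
    intro W M hM hP w
    rw [ksat_impl]
    rintro ⟨hG, hH⟩
    have hG' := ksat_alive_refl.mp hG
    have hH' := ksat_alive_refl.mp hH
    rw [ksat_alive_refl, hM.d]
    intro B hB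
    rcases Finset.mem_union.mp hB with h | h
    · exact (hM.d G w w).mp hG' B h
    · exact (hM.d H w w).mp hH' B h
  | @axClo G A B hAB hA hB =>
    intro W M hM hP w
    rw [ksat_impl, ksat_alive_refl, ksat_alive_refl]
    intro h1
    exact hM.k2 G A B hAB w hA hB h1
  | mp h1 h2 ih1 ih2 =>
    intro W M hM hP w
    exact ksat_impl.mp (ih1 M hM hP w) (ih2 M hM hP w)
  | nec G h ih =>
    intro W M hM hP w
    intro v hrel
    exact ih M hM hP v

end SynProof

namespace SynProof
open Form

variable {Ag P : Type} [DecidableEq Ag] [Fintype Ag] {p₀ : P}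

/-! ### Provability combinators -/

lemma prov_taut_mp {φ ψ : Form Ag P} (h1 : ∀ v, pEval v φ → pEval v ψ)
    (h2 : SynD p₀ φ) : SynD p₀ ψ :=
  SynD.mp (SynD.taut (fun v => pEval_impl.mpr (h1 v))) h2

lemma prov_imp {φ ψ : Form Ag P} (h : ∀ v, pEval v φ → pEval v ψ) :
    SynD p₀ (φ.impl ψ) :=
  SynD.taut (fun v => pEval_impl.mpr (h v))

lemma prov_taut_mp2 {φ χ ψ : Form Ag P} (h1 : ∀ v, pEval v φ → pEval v χ → pEval v ψ)
    (h2 : SynD p₀ φ) (h3 : SynD p₀ χ) : SynD p₀ ψ :=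
  SynD.mp (prov_taut_mp (fun v hφ => pEval_impl.mpr (h1 v hφ)) h2) h3

lemma prov_imp_trans {φ ψ χ : Form Ag P} (h1 : SynD p₀ (φ.impl ψ))
    (h2 : SynD p₀ (ψ.impl χ)) : SynD p₀ (φ.impl χ) :=
  prov_taut_mp2 (fun v => by simp only [pEval_impl]; tauto) h1 h2

lemma prov_box_mono {G : Pat Ag} {φ ψ : Form Ag P} (h : SynD p₀ (φ.impl ψ)) :
    SynD p₀ ((Form.box G φ).impl (Form.box G ψ)) :=
  SynD.mp (SynD.axK G φ ψ) (SynD.nec G h)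

lemma prov_box_and {G : Pat Ag} {φ ψ : Form Ag P} :
    SynD p₀ ((Form.and (Form.box G φ) (Form.box G ψ)).impl (Form.box G (Form.and φ ψ))) := by
  have h1 : SynD p₀ (φ.impl (ψ.impl (Form.and φ ψ))) :=
    prov_imp (fun v hφ => pEval_impl.mpr (fun hψ => ⟨hφ, hψ⟩))
  have h2 : SynD p₀ ((Form.box G φ).impl (Form.box G (ψ.impl (Form.and φ ψ)))) :=
    prov_box_mono h1
  have h3 : SynD p₀ ((Form.box G (ψ.impl (Form.and φ ψ))).impl
      ((Form.box G ψ).impl (Form.box G (Form.and φ ψ)))) := SynD.axK G _ _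
  exact prov_taut_mp2 (fun v => by simp only [pEval_impl, pEval]; tauto) h2 h3

lemma prov_conj_boxes {G : Pat Ag} : ∀ (l : List (Form Ag P)),
    SynD p₀ ((conjList p₀ (l.map (Form.box G))).impl (Form.box G (conjList p₀ l)))
  | [] => by
    have h : SynD p₀ (Form.box G (conjList p₀ ([] : List (Form Ag P)))) :=
      SynD.nec G (SynD.taut (fun v => by simp [pEval_conjList]))
    exact prov_taut_mp (fun v hb => pEval_impl.mpr (fun _ => hb)) h
  | ψ :: l => by
    have ih := prov_conj_boxes l (G := G)
    have h2 : SynD p₀ ((Form.and (Form.box G ψ) (Form.box G (conjList p₀ l))).impl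
        (Form.box G (Form.and ψ (conjList p₀ l)))) := prov_box_and
    exact prov_taut_mp2 (fun v => by
      simp only [List.map_cons, conjList, pEval_impl, pEval]; tauto) ih h2

/-! ### Consistency and maximal consistent sets -/

def Con (p₀ : P) (S : Set (Form Ag P)) : Prop :=
  ∀ l : List (Form Ag P), (∀ ψ ∈ l, ψ ∈ S) → ¬ SynD p₀ (Form.neg (conjList p₀ l))

def Mcs (p₀ : P) (S : Set (Form Ag P)) : Prop :=
  Con p₀ S ∧ ∀ φ, φ ∈ S ∨ Form.neg φ ∈ S

variable {S : Set (Form Ag P)}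

lemma mcs_not_both (hS : Mcs p₀ S) {φ : Form Ag P} (h1 : φ ∈ S) (h2 : Form.neg φ ∈ S) :
    False := by
  refine hS.1 [φ, Form.neg φ] ?_ ?_
  · intro ψ hψ
    simp only [List.mem_cons, List.not_mem_nil, or_false] at hψ
    rcases hψ with rfl | rfl
    · exact h1
    · exact h2
  · refine SynD.taut (fun v => ?_)
    show ¬ _
    rw [pEval_conjList]
    intro hall
    exact (hall (Form.neg φ) (by simp)) (hall φ (by simp))

lemma mem_of_prov (hS : Mcs p₀ S) {φ : Form Ag P} (h : SynD p₀ φ) : φ ∈ S := by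
  rcases hS.2 φ with hm | hm
  · exact hm
  · exfalso
    refine hS.1 [Form.neg φ] (by intro ψ hψ; simp at hψ; exact hψ ▸ hm) ?_
    refine prov_taut_mp (φ := φ) (fun v hφ => ?_) h
    show ¬ _
    rw [pEval_conjList]
    intro hall
    exact (hall (Form.neg φ) (by simp)) hφ

lemma mcs_mp (hS : Mcs p₀ S) {φ ψ : Form Ag P} (h1 : φ ∈ S) (h2 : φ.impl ψ ∈ S) :
    ψ ∈ S := by
  rcases hS.2 ψ with hm | hm
  · exact hm
  · exfalso
    refine hS.1 [φ, φ.impl ψ, Form.neg ψ] ?_ ?_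
    · intro χ hχ
      simp only [List.mem_cons, List.not_mem_nil, or_false] at hχ
      rcases hχ with rfl | rfl | rfl
      · exact h1
      · exact h2
      · exact hm
    · refine SynD.taut (fun v => ?_)
      show ¬ _
      rw [pEval_conjList]
      intro hall
      have hi := hall (φ.impl ψ) (by simp)
      rw [pEval_impl] at hi
      exact (hall (Form.neg ψ) (by simp)) (hi (hall φ (by simp)))

lemma mcs_imp (hS : Mcs p₀ S) {φ ψ : Form Ag P} (h : SynD p₀ (φ.impl ψ)) (h1 : φ ∈ S) :
    ψ ∈ S := mcs_mp hS h1 (mem_of_prov hS h)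

lemma neg_mem_iff (hS : Mcs p₀ S) {φ : Form Ag P} : Form.neg φ ∈ S ↔ φ ∉ S := by
  constructor
  · intro h hm
    exact mcs_not_both hS hm h
  · intro h
    rcases hS.2 φ with hm | hm
    · exact absurd hm h
    · exact hm

lemma and_mem_iff (hS : Mcs p₀ S) {φ ψ : Form Ag P} :
    Form.and φ ψ ∈ S ↔ φ ∈ S ∧ ψ ∈ S := by
  constructor
  · intro h
    constructor
    · exact mcs_imp hS (prov_imp (fun v hv => by simp only [pEval] at hv; exact hv.1)) h
    · exact mcs_imp hS (prov_imp (fun v hv => by simp only [pEval] at hv; exact hv.2)) h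
  · rintro ⟨h1, h2⟩
    rcases hS.2 (Form.and φ ψ) with hm | hm
    · exact hm
    · exfalso
      refine hS.1 [φ, ψ, Form.neg (Form.and φ ψ)] ?_ ?_
      · intro χ hχ
        simp only [List.mem_cons, List.not_mem_nil, or_false] at hχ
        rcases hχ with rfl | rfl | rfl
        · exact h1
        · exact h2
        · exact hm
      · refine SynD.taut (fun v => ?_)
        show ¬ _
        rw [pEval_conjList]
        intro hall
        exact (hall (Form.neg (Form.and φ ψ)) (by simp))
          ⟨hall φ (by simp), hall ψ (by simp)⟩

lemma conj_mem (hS : Mcs p₀ S) : ∀ {l : List (Form Ag P)}, (∀ ψ ∈ l, ψ ∈ S) →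
    conjList p₀ l ∈ S
  | [], _ => mem_of_prov hS (SynD.taut (fun v => by simp [pEval_conjList]))
  | φ :: l, h => by
    rw [conjList, and_mem_iff hS]
    exact ⟨h φ (by simp), conj_mem hS (fun ψ hψ => h ψ (by simp [hψ]))⟩

lemma prov_conj_separate {l m : List (Form Ag P)} {χ : Form Ag P}
    (hsub : ∀ ψ ∈ l, ψ ∈ m ∨ ψ = χ) (h : SynD p₀ (Form.neg (conjList p₀ l))) :
    SynD p₀ ((conjList p₀ m).impl (Form.neg χ)) := by
  refine prov_taut_mp (fun v hv => ?_) h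
  rw [pEval_impl]
  intro hm
  show ¬ _
  intro hχ
  apply hv
  rw [pEval_conjList] at hm ⊢
  intro ψ hψ
  rcases hsub ψ hψ with h' | h'
  · exact hm ψ h'
  · exact h' ▸ hχ

/-! ### Lindenbaum -/

lemma lindenbaum (hS : Con p₀ S) : ∃ T, S ⊆ T ∧ Mcs p₀ T := by
  classical
  have hub : ∀ c ⊆ {T : Set (Form Ag P) | Con p₀ T}, IsChain (· ⊆ ·) c → c.Nonempty →
      ∃ ub ∈ {T : Set (Form Ag P) | Con p₀ T}, ∀ s ∈ c, s ⊆ ub := by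
    intro c hc hchain hne
    refine ⟨⋃₀ c, ?_, fun s hs => Set.subset_sUnion_of_mem hs⟩
    have key : ∀ (l : List (Form Ag P)), (∀ ψ ∈ l, ψ ∈ ⋃₀ c) → ∃ T ∈ c, ∀ ψ ∈ l, ψ ∈ T := by
      intro l
      induction l with
      | nil =>
        intro _
        obtain ⟨T, hT⟩ := hne
        exact ⟨T, hT, by simp⟩
      | cons ψ l ih =>
        intro hl
        obtain ⟨T1, hT1, hT1l⟩ := ih (fun χ hχ => hl χ (by simp [hχ]))
        obtain ⟨T2, hT2, hψT2⟩ := Set.mem_sUnion.mp (hl ψ (by simp))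
        rcases hchain.total hT1 hT2 with h | h
        · exact ⟨T2, hT2, fun χ hχ => by
            rcases List.mem_cons.mp hχ with h' | h'
            · exact h' ▸ hψT2
            · exact h (hT1l χ h')⟩
        · exact ⟨T1, hT1, fun χ hχ => by
            rcases List.mem_cons.mp hχ with h' | h'
            · exact h' ▸ (h hψT2)
            · exact hT1l χ h'⟩
    intro l hl
    obtain ⟨T, hTc, hTl⟩ := key l hl
    exact hc hTc l hTl
  obtain ⟨m, hSm, hmem, hmax⟩ :=
    zorn_subset_nonempty {T : Set (Form Ag P) | Con p₀ T} hub S hS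
  refine ⟨m, hSm, hmem, ?_⟩
  intro φ
  by_contra hc
  push_neg at hc
  obtain ⟨hφ, hnφ⟩ := hc
  have hcon1 : ¬ Con p₀ (insert φ m) := by
    intro hcon
    exact hφ (hmax hcon (Set.subset_insert _ _) (Set.mem_insert φ m))
  have hcon2 : ¬ Con p₀ (insert (Form.neg φ) m) := by
    intro hcon
    exact hnφ (hmax hcon (Set.subset_insert _ _) (Set.mem_insert _ m))
  rw [Con] at hcon1 hcon2
  push_neg at hcon1 hcon2
  obtain ⟨l₁, hl₁, hp₁⟩ := hcon1
  obtain ⟨l₂, hl₂, hp₂⟩ := hcon2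
  set m₁ := l₁.filter (fun ψ => decide (ψ ≠ φ)) with hm₁
  set m₂ := l₂.filter (fun ψ => decide (ψ ≠ Form.neg φ)) with hm₂
  have hm₁m : ∀ ψ ∈ m₁, ψ ∈ m := by
    intro ψ hψ
    rw [hm₁, List.mem_filter] at hψ
    rcases hl₁ ψ hψ.1 with h | h
    · exact absurd h (by simpa using hψ.2)
    · exact h
  have hm₂m : ∀ ψ ∈ m₂, ψ ∈ m := by
    intro ψ hψ
    rw [hm₂, List.mem_filter] at hψ
    rcases hl₂ ψ hψ.1 with h | h
    · exact absurd h (by simpa using hψ.2)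
    · exact h
  have hsep1 : SynD p₀ ((conjList p₀ m₁).impl (Form.neg φ)) := by
    refine prov_conj_separate (fun ψ hψ => ?_) hp₁
    by_cases h : ψ = φ
    · exact Or.inr h
    · exact Or.inl (by rw [hm₁, List.mem_filter]; simp [hψ, h])
  have hsep2 : SynD p₀ ((conjList p₀ m₂).impl (Form.neg (Form.neg φ))) := by
    refine prov_conj_separate (fun ψ hψ => ?_) hp₂
    by_cases h : ψ = Form.neg φ
    · exact Or.inr h
    · exact Or.inl (by rw [hm₂, List.mem_filter]; simp [hψ, h])
  refine hmem (m₁ ++ m₂) (fun ψ hψ => ?_) ?_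
  · rcases List.mem_append.mp hψ with h | h
    · exact hm₁m ψ h
    · exact hm₂m ψ h
  · refine prov_taut_mp2 (fun v h1 h2 => ?_) hsep1 hsep2
    rw [pEval_impl] at h1 h2
    show ¬ _
    rw [pEval_conjList]
    intro hall
    have e1 : pEval v (conjList p₀ m₁) := by
      rw [pEval_conjList]; exact fun ψ hψ => hall ψ (List.mem_append.mpr (Or.inl hψ))
    have e2 : pEval v (conjList p₀ m₂) := by
      rw [pEval_conjList]; exact fun ψ hψ => hall ψ (List.mem_append.mpr (Or.inr hψ))
    exact (h2 e2) (h1 e1)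

lemma con_singleton_neg {φ : Form Ag P} (h : ¬ SynD p₀ φ) :
    Con p₀ {Form.neg φ} := by
  intro l hl hprov
  apply h
  refine prov_taut_mp (fun v hv => ?_) hprov
  by_contra hφ
  apply hv
  rw [pEval_conjList]
  intro ψ hψ
  have := hl ψ hψ
  rw [Set.mem_singleton_iff] at this
  subst this
  exact hφ

end SynProof

namespace SynProof
open Form

def MCSet (Ag P : Type) [DecidableEq Ag] [Fintype Ag] (p₀ : P) : Type :=
  {S : Set (Form Ag P) // Mcs p₀ S}

variable {Ag P : Type} [DecidableEq Ag] [Fintype Ag] {p₀ : P}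

def rel0 (G : Pat Ag) (Δ Θ : MCSet Ag P p₀) : Prop :=
  ∀ ψ, Form.box G ψ ∈ Δ.1 → ψ ∈ Θ.1

def Covers (H G : Pat Ag) : Prop := ∀ B ∈ G.1, ∃ A ∈ H.1, B ⊆ A

def patUnionF (s : Finset (Finset Ag)) (hs : (∅ : Finset Ag) ∉ s) (H : Pat Ag) : Pat Ag :=
  ⟨s ∪ H.1, by
    intro hm
    rcases Finset.mem_union.mp hm with h | h
    · exact hs h
    · exact H.2 h⟩

lemma prov_box_unionF (H : Pat Ag) (ψ : Form Ag P) :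
    ∀ (s : Finset (Finset Ag)) (hs : (∅ : Finset Ag) ∉ s)
      (h2 : ∀ B ∈ s, ∃ A ∈ H.1, B ⊆ A),
      SynD p₀ ((Form.box (patUnionF s hs H) ψ).impl (Form.box H ψ)) := by
  intro s
  induction s using Finset.induction_on with
  | empty =>
    intro hs h2
    have he : patUnionF (∅ : Finset (Finset Ag)) hs H = H := Subtype.ext (by simp [patUnionF])
    rw [he]
    exact prov_imp (fun v h => h)
  | @insert a s' ha ih =>
    intro hs h2
    have ha' : a ≠ ∅ := fun he => hs (he ▸ Finset.mem_insert_self a s')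
    have hs' : (∅ : Finset Ag) ∉ s' := fun h => hs (Finset.mem_insert_of_mem h)
    have hpe : patUnionF (insert a s') hs H = Pat.ins a ha' (patUnionF s' hs' H) :=
      Subtype.ext (by simp [patUnionF, Pat.ins, Finset.insert_union])
    rw [hpe]
    obtain ⟨A, hA, hsub⟩ := h2 a (Finset.mem_insert_self a s')
    have hEq : SynD p₀ ((Form.box (Pat.ins a ha' (patUnionF s' hs' H)) ψ).impl
        (Form.box (patUnionF s' hs' H) ψ)) :=
      SynD.axEquiv ha' ψ ⟨A, Finset.mem_union_right _ hA, hsub⟩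
    exact prov_imp_trans hEq (ih hs' (fun B hB => h2 B (Finset.mem_insert_of_mem hB)))

lemma prov_box_covers {G H : Pat Ag} (h : Covers H G) (ψ : Form Ag P) :
    SynD p₀ ((Form.box G ψ).impl (Form.box H ψ)) := by
  have h1 : SynD p₀ ((Form.box G ψ).impl (Form.box (patUnionF G.1 G.2 H) ψ)) :=
    SynD.axMono ψ (Finset.subset_union_left)
  exact prov_imp_trans h1 (prov_box_unionF H ψ G.1 G.2 h)

lemma mcs_falsum_not {S : Set (Form Ag P)} (hS : Mcs p₀ S) : falsum p₀ ∉ S := by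
  intro h
  refine hS.1 [falsum p₀] (by intro ψ hψ; simp at hψ; exact hψ ▸ h) ?_
  refine SynD.taut (fun v => ?_)
  show ¬ _
  rw [pEval_conjList]
  intro hall
  exact pEval_falsum.mp (hall (falsum p₀) (by simp))

lemma rel0_alive {G : Pat Ag} {Δ Θ : MCSet Ag P p₀} (h : rel0 G Δ Θ) :
    aliveF p₀ G ∈ Δ.1 := by
  by_contra hn
  have h1 : Form.neg (aliveF p₀ G) ∈ Δ.1 := (neg_mem_iff Δ.2).mpr hn
  have h2 : Form.box G (falsum p₀) ∈ Δ.1 := by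
    refine mcs_imp Δ.2 (prov_imp (fun v hv => ?_)) h1
    simp only [aliveF, pEval] at hv
    exact not_not.mp hv
  exact mcs_falsum_not Θ.2 (h _ h2)

lemma rel0_refl {G : Pat Ag} {Δ : MCSet Ag P p₀} (h : aliveF p₀ G ∈ Δ.1) :
    rel0 G Δ Δ := by
  intro ψ hψ
  exact mcs_mp Δ.2 hψ (mcs_imp Δ.2 (SynD.axT G ψ) h)

lemma rel0_symm {G : Pat Ag} {Δ Θ : MCSet Ag P p₀} (h : rel0 G Δ Θ) : rel0 G Θ Δ := by
  intro ψ hψ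
  by_contra hn
  have h1 : Form.neg ψ ∈ Δ.1 := (neg_mem_iff Δ.2).mpr hn
  have h2 : Form.box G (Form.neg (Form.box G (Form.neg (Form.neg ψ)))) ∈ Δ.1 :=
    mcs_imp Δ.2 (SynD.axB G (Form.neg ψ)) h1
  have h3 : Form.neg (Form.box G (Form.neg (Form.neg ψ))) ∈ Θ.1 := h _ h2
  have h4 : Form.box G (Form.neg (Form.neg ψ)) ∈ Θ.1 :=
    mcs_imp Θ.2 (prov_box_mono (prov_imp (fun v hv hc => hc hv))) hψ
  exact mcs_not_both Θ.2 h4 h3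

lemma rel0_trans {G : Pat Ag} {Δ Θ Ξ : MCSet Ag P p₀} (h1 : rel0 G Δ Θ)
    (h2 : rel0 G Θ Ξ) : rel0 G Δ Ξ := by
  intro ψ hψ
  exact h2 _ (h1 _ (mcs_imp Δ.2 (SynD.ax4 G ψ) hψ))

lemma rel0_of_covers {G H : Pat Ag} {Δ Θ : MCSet Ag P p₀} (hc : Covers H G)
    (h : rel0 H Δ Θ) : rel0 G Δ Θ := by
  intro ψ hψ
  exact h _ (mcs_imp Δ.2 (prov_box_covers hc ψ) hψ)

lemma rel0_mono {G H : Pat Ag} {Δ Θ : MCSet Ag P p₀} (hGH : G.1 ⊆ H.1)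
    (h : rel0 H Δ Θ) : rel0 G Δ Θ := by
  intro ψ hψ
  exact h _ (mcs_imp Δ.2 (SynD.axMono ψ hGH) hψ)

/-! ### Existence lemma -/

lemma exists_rel0 (Δ : MCSet Ag P p₀) (G : Pat Ag) (φ : Form Ag P)
    (h : Form.box G φ ∉ Δ.1) : ∃ Θ : MCSet Ag P p₀, rel0 G Δ Θ ∧ φ ∉ Θ.1 := by
  classical
  set Y : Set (Form Ag P) := {ψ | Form.box G ψ ∈ Δ.1} ∪ {Form.neg φ} with hY
  have hcon : Con p₀ Y := by
    intro l hl hprov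
    set m' := l.filter (fun ψ => decide (ψ ≠ Form.neg φ)) with hm'
    have hbox : ∀ ψ ∈ m', Form.box G ψ ∈ Δ.1 := by
      intro ψ hψ
      rw [hm', List.mem_filter] at hψ
      rcases hl ψ hψ.1 with h' | h'
      · exact h'
      · exact absurd h' (by simpa using hψ.2)
    have hsep : SynD p₀ ((conjList p₀ m').impl (Form.neg (Form.neg φ))) := by
      refine prov_conj_separate (fun ψ hψ => ?_) hprov
      by_cases hc : ψ = Form.neg φ
      · exact Or.inr hc
      · exact Or.inl (by rw [hm', List.mem_filter]; simp [hψ, hc])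
    have himp : SynD p₀ ((conjList p₀ m').impl φ) := by
      refine prov_taut_mp (fun v hv => ?_) hsep
      rw [pEval_impl] at hv ⊢
      intro hm
      have := hv hm
      simp only [pEval] at this
      exact not_not.mp this
    have hmem1 : conjList p₀ (m'.map (Form.box G)) ∈ Δ.1 := by
      refine conj_mem Δ.2 (fun χ hχ => ?_)
      rcases List.mem_map.mp hχ with ⟨ψ, hψ, rfl⟩
      exact hbox ψ hψ
    have hmem2 : Form.box G (conjList p₀ m') ∈ Δ.1 :=
      mcs_imp Δ.2 (prov_conj_boxes m') hmem1
    exact h (mcs_imp Δ.2 (prov_box_mono himp) hmem2)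
  obtain ⟨T, hYT, hT⟩ := lindenbaum hcon
  refine ⟨⟨T, hT⟩, fun ψ hψ => hYT (Or.inl hψ), fun hφ => ?_⟩
  exact mcs_not_both hT hφ (hYT (Or.inr rfl))

/-! ### alive lemmas -/

lemma prov_disj_elim {χ : Form Ag P} : ∀ {l : List (Form Ag P)},
    (∀ ψ ∈ l, SynD p₀ (ψ.impl χ)) → SynD p₀ ((disjList p₀ l).impl χ)
  | [], _ => prov_imp (fun v h => (pEval_falsum.mp h).elim)
  | ψ :: l, h => by
    have h1 := h ψ (by simp)
    have h2 := prov_disj_elim (l := l) (fun ρ hρ => h ρ (by simp [hρ]))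
    refine prov_taut_mp2 (fun v e1 e2 => ?_) h1 h2
    rw [pEval_impl] at e1 e2 ⊢
    simp only [disjList, pEval]
    intro hd
    rcases not_and_or.mp hd with hd | hd
    · exact e1 (not_not.mp hd)
    · exact e2 (not_not.mp hd)

lemma prov_alive_empty (hs : (∅ : Finset Ag) ∉ (∅ : Finset (Finset Ag))) :
    SynD p₀ (aliveF p₀ (⟨∅, hs⟩ : Pat Ag)) := by
  refine SynD.mp (prov_disj_elim ?_) (SynD.axNE (p₀ := p₀))
  intro ψ hψ
  rcases List.mem_map.mp hψ with ⟨G, -, rfl⟩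
  have hmono : SynD p₀ ((Form.box (⟨∅, hs⟩ : Pat Ag) (falsum p₀)).impl
      (Form.box G (falsum p₀))) := SynD.axMono _ (Finset.empty_subset _)
  refine prov_taut_mp (fun v hv => ?_) hmono
  rw [pEval_impl] at hv
  rw [pEval_impl]
  simp only [aliveF, pEval]
  exact fun ha hg => ha (hv hg)

lemma alive_union_mem {Δ : MCSet Ag P p₀} :
    ∀ (s : Finset (Finset Ag)) (hs : (∅ : Finset Ag) ∉ s),
      (∀ B ∈ s, ∀ hne : B ≠ ∅, aliveF p₀ (Pat.single B hne) ∈ Δ.1) →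
      aliveF p₀ (⟨s, hs⟩ : Pat Ag) ∈ Δ.1 := by
  intro s
  induction s using Finset.induction_on with
  | empty =>
    intro hs _
    exact mem_of_prov Δ.2 (prov_alive_empty hs)
  | @insert a s' ha ih =>
    intro hs h
    have ha' : a ≠ ∅ := fun he => hs (he ▸ Finset.mem_insert_self a s')
    have hs' : (∅ : Finset Ag) ∉ s' := fun h' => hs (Finset.mem_insert_of_mem h')
    have h1 : aliveF p₀ (Pat.single a ha') ∈ Δ.1 := h a (Finset.mem_insert_self a s') ha'
    have h2 : aliveF p₀ (⟨s', hs'⟩ : Pat Ag) ∈ Δ.1 :=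
      ih hs' (fun B hB hne => h B (Finset.mem_insert_of_mem hB) hne)
    have h3 := SynD.axUnion (p₀ := p₀) (Pat.single a ha') (⟨s', hs'⟩ : Pat Ag)
    have hpe : Pat.union (Pat.single a ha') (⟨s', hs'⟩ : Pat Ag) = ⟨insert a s', hs⟩ :=
      Subtype.ext (by ext x; simp [Pat.union, Pat.single, Finset.mem_union, Finset.mem_insert, Finset.mem_singleton])
    rw [hpe] at h3
    exact mcs_imp Δ.2 h3 ((and_mem_iff Δ.2).mpr ⟨h1, h2⟩)

/-! ### The alive pattern of an MCS and the properness lemma -/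

open Classical in
noncomputable def Fset (Δ : MCSet Ag P p₀) : Finset (Finset Ag) :=
  Finset.univ.filter (fun B => ∃ hne : B ≠ ∅, aliveF p₀ (Pat.single B hne) ∈ Δ.1)

lemma mem_Fset {Δ : MCSet Ag P p₀} {B : Finset Ag} :
    B ∈ Fset Δ ↔ ∃ hne : B ≠ ∅, aliveF p₀ (Pat.single B hne) ∈ Δ.1 := by
  classical
  simp [Fset]

noncomputable def Fpat (Δ : MCSet Ag P p₀) : Pat Ag :=
  ⟨Fset Δ, by
    intro h
    obtain ⟨hne, -⟩ := mem_Fset.mp h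
    exact hne rfl⟩

lemma alive_Fpat (Δ : MCSet Ag P p₀) : aliveF p₀ (Fpat Δ) ∈ Δ.1 := by
  refine alive_union_mem (Fset Δ) (Fpat Δ).2 ?_
  intro B hB hne
  obtain ⟨hne', h⟩ := mem_Fset.mp hB
  exact h

lemma mem_patC {G : Pat Ag} {B : Finset Ag} :
    B ∈ (patC G).1 ↔ B ≠ ∅ ∧ ∀ A ∈ G.1, ¬ B ⊆ A := by
  simp [patC]

lemma dead_patC_mem {Δ Θ : MCSet Ag P p₀} (hsub : Fset Θ ⊆ Fset Δ) :
    deadF p₀ (patC (Fpat Δ)) ∈ Θ.1 := by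
  rw [deadF]
  refine conj_mem Θ.2 (fun ψ hψ => ?_)
  rcases List.mem_map.mp hψ with ⟨⟨B, hB⟩, -, rfl⟩
  refine (neg_mem_iff Θ.2).mpr ?_
  intro halive
  have hne : B ≠ ∅ := fun he => (patC (Fpat Δ)).2 (he ▸ hB)
  have hBΘ : B ∈ Fset Θ := mem_Fset.mpr ⟨hne, halive⟩
  have hBΔ : B ∈ Fset Δ := hsub hBΘ
  exact (mem_patC.mp hB).2 B hBΔ (subset_refl B)

lemma P_lemma {Δ Θ : MCSet Ag P p₀} (h0 : rel0 (Fpat Δ) Δ Θ)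
    (hsub : Fset Θ ⊆ Fset Δ) : Δ = Θ := by
  have hdeadΔ : deadF p₀ (patC (Fpat Δ)) ∈ Δ.1 := dead_patC_mem (subset_refl _)
  have hdeadΘ : deadF p₀ (patC (Fpat Δ)) ∈ Θ.1 := dead_patC_mem hsub
  have hsubset : ∀ χ ∈ Δ.1, χ ∈ Θ.1 := by
    intro χ hχ
    have hand : Form.and (aliveF p₀ (Fpat Δ))
        (Form.and (deadF p₀ (patC (Fpat Δ))) χ) ∈ Δ.1 :=
      (and_mem_iff Δ.2).mpr ⟨alive_Fpat Δ, (and_mem_iff Δ.2).mpr ⟨hdeadΔ, hχ⟩⟩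
    have hbox : Form.box (Fpat Δ) ((deadF p₀ (patC (Fpat Δ))).impl χ) ∈ Δ.1 :=
      mcs_imp Δ.2 (SynD.axP (Fpat Δ) χ) hand
    exact mcs_mp Θ.2 hdeadΘ (h0 _ hbox)
  refine Subtype.ext (Set.ext (fun ψ => ⟨hsubset ψ, fun hψ => ?_⟩))
  by_contra hn
  exact mcs_not_both Θ.2 hψ (hsubset _ ((neg_mem_iff Δ.2).mpr hn))

end SynProof

namespace SynProof
open Form

variable {Ag P : Type} [DecidableEq Ag] [Fintype Ag] {p₀ : P}

/-! ### Tree of canonical worlds -/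

inductive Node (Ag P : Type) [DecidableEq Ag] [Fintype Ag] (p₀ : P) : Type
  | root : Node Ag P p₀
  | child (s : Node Ag P p₀) (G : Pat Ag) (Θ : MCSet Ag P p₀) : Node Ag P p₀

def lastM (Δ₀ : MCSet Ag P p₀) : Node Ag P p₀ → MCSet Ag P p₀
  | .root => Δ₀
  | .child _ _ Θ => Θ

def ValidN (Δ₀ : MCSet Ag P p₀) : Node Ag P p₀ → Prop
  | .root => True
  | .child s G Θ => ValidN Δ₀ s ∧ rel0 G (lastM Δ₀ s) Θ

def depthN : Node Ag P p₀ → ℕ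
  | .root => 0
  | .child s _ _ => depthN s + 1

inductive Anc : Node Ag P p₀ → Node Ag P p₀ → Prop
  | refl (s) : Anc s s
  | step {u s G Θ} : Anc u s → Anc u (.child s G Θ)

/-- `G` covers `B`. -/
def covP (G : Pat Ag) (B : Finset Ag) : Prop := ∃ A ∈ G.1, B ⊆ A

inductive ChainB (B : Finset Ag) : Node Ag P p₀ → Node Ag P p₀ → Prop
  | refl (s) : ChainB B s s
  | step {u s G Θ} : ChainB B u s → covP G B → ChainB B u (.child s G Θ)

lemma anc_of_chain {B : Finset Ag} {u s : Node Ag P p₀} (h : ChainB B u s) : Anc u s := by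
  induction h with
  | refl => exact Anc.refl _
  | step h hc ih => exact Anc.step ih

lemma anc_root (s : Node Ag P p₀) : Anc .root s := by
  induction s with
  | root => exact Anc.refl _
  | child s G Θ ih => exact Anc.step ih

lemma depth_le_of_anc {u s : Node Ag P p₀} (h : Anc u s) : depthN u ≤ depthN s := by
  induction h with
  | refl => exact le_refl _
  | step h ih => exact ih.trans (Nat.le_succ _)

lemma anc_antisymm {u s : Node Ag P p₀} (h1 : Anc u s) (h2 : Anc s u) : u = s := by
  cases h1 with
  | refl => rfl
  | @step s0 G Θ h =>
    exfalso
    have d1 := depth_le_of_anc h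
    have d2 := depth_le_of_anc h2
    simp only [depthN] at d2
    omega

lemma anc_comparable {u u' s : Node Ag P p₀} (h1 : Anc u s) (h2 : Anc u' s) :
    Anc u u' ∨ Anc u' u := by
  induction h1 with
  | refl => exact Or.inr h2
  | @step s0 G Θ h ih =>
    cases h2 with
    | refl => exact Or.inl (Anc.step h)
    | step h2' => exact ih h2'

lemma chainB_suffix {B : Finset Ag} {u w s : Node Ag P p₀} (h : ChainB B u s)
    (hw : Anc w s) (huw : Anc u w) : ChainB B w s := by
  induction h with
  | refl =>
    cases anc_antisymm huw hw
    exact ChainB.refl _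
  | step h hc ih =>
    cases hw with
    | refl => exact ChainB.refl _
    | step hw' => exact ChainB.step (ih hw') hc
  
lemma chainB_prefix {B : Finset Ag} {u w s : Node Ag P p₀} (h : ChainB B u s)
    (hw : Anc w s) (huw : Anc u w) : ChainB B u w := by
  induction h with
  | refl =>
    cases anc_antisymm huw hw
    exact ChainB.refl _
  | step h hc ih =>
    cases hw with
    | refl => exact ChainB.step h hc
    | step hw' => exact ih hw'

lemma chainB_trans {B : Finset Ag} {u w s : Node Ag P p₀} (h1 : ChainB B u w)
    (h2 : ChainB B w s) : ChainB B u s := by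
  induction h2 with
  | refl => exact h1
  | step h hc ih => exact ChainB.step ih hc

lemma chainB_mono {B B' : Finset Ag} (hsub : B' ⊆ B) {u s : Node Ag P p₀}
    (h : ChainB B u s) : ChainB B' u s := by
  induction h with
  | refl => exact ChainB.refl _
  | step h hc ih =>
    obtain ⟨A, hA, hBA⟩ := hc
    exact ChainB.step ih ⟨A, hA, hsub.trans hBA⟩

open Classical in
noncomputable def meetN : Node Ag P p₀ → Node Ag P p₀ → Node Ag P p₀
  | .root, _ => .root
  | .child s G Θ, t => if Anc (.child s G Θ) t then .child s G Θ else meetN s t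

lemma meetN_anc_left (s t : Node Ag P p₀) : Anc (meetN s t) s := by
  induction s with
  | root => exact Anc.refl _
  | child s G Θ ih =>
    rw [meetN]
    split
    · exact Anc.refl _
    · exact Anc.step ih

lemma meetN_anc_right (s t : Node Ag P p₀) : Anc (meetN s t) t := by
  induction s with
  | root => exact anc_root t
  | child s G Θ ih =>
    rw [meetN]
    split
    · assumption
    · exact ih

lemma anc_meetN {u s t : Node Ag P p₀} (h1 : Anc u s) (h2 : Anc u t) :
    Anc u (meetN s t) := by
  induction s with
  | root =>
    cases h1
    exact Anc.refl _
  | child s G Θ ih =>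
    rw [meetN]
    split
    · exact h1
    · cases h1 with
      | refl => exact absurd h2 (by assumption)
      | step h1' => exact ih h1'

end SynProof

namespace SynProof
open Form

variable {Ag P : Type} [DecidableEq Ag] [Fintype Ag] {p₀ : P}

/-! ### Fset closure lemmas -/

lemma Fset_downward {Δ : MCSet Ag P p₀} {B B' : Finset Ag} (hB : B ∈ Fset Δ)
    (hne : B' ≠ ∅) (hsub : B' ⊆ B) : B' ∈ Fset Δ := by
  obtain ⟨hneB, halive⟩ := mem_Fset.mp hB
  refine mem_Fset.mpr ⟨hne, ?_⟩
  have hcov : Covers (Pat.single B hneB) (Pat.single B' hne) := by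
    intro C hC
    simp only [Pat.single, Finset.mem_singleton] at hC
    exact ⟨B, by simp [Pat.single], hC ▸ hsub⟩
  have hprov := prov_box_covers (p₀ := p₀) hcov (falsum p₀)
  refine mcs_imp Δ.2 (prov_taut_mp (fun v hv => ?_) hprov) halive
  rw [pEval_impl] at hv
  rw [pEval_impl]
  simp only [aliveF, pEval]
  exact fun ha hg => ha (hv hg)

lemma Fset_union_mem {Δ : MCSet Ag P p₀} {A B : Finset Ag} (hA : A ∈ Fset Δ)
    (hB : B ∈ Fset Δ) : A ∪ B ∈ Fset Δ := by
  obtain ⟨hneA, haA⟩ := mem_Fset.mp hA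
  obtain ⟨hneB, haB⟩ := mem_Fset.mp hB
  have hneAB : A ∪ B ≠ ∅ := by
    intro h
    exact hneA (Finset.union_eq_empty.mp h).1
  set U := Pat.union (Pat.single A hneA) (Pat.single B hneB) with hU
  have hAU : A ∈ U.1 := Finset.mem_union_left _ (by simp [Pat.single])
  have hBU : B ∈ U.1 := Finset.mem_union_right _ (by simp [Pat.single])
  have h1 : aliveF p₀ U ∈ Δ.1 :=
    mcs_imp Δ.2 (SynD.axUnion _ _) ((and_mem_iff Δ.2).mpr ⟨haA, haB⟩)
  have h2 : aliveF p₀ (Pat.single (A ∪ B) hneAB) ∈ Δ.1 :=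
    mcs_imp Δ.2 (SynD.axClo hneAB hAU hBU) h1
  exact mem_Fset.mpr ⟨hneAB, h2⟩

/-! ### RB relation -/

variable (Δ₀ : MCSet Ag P p₀)

def RB (B : Finset Ag) (s t : Node Ag P p₀) : Prop :=
  B ∈ Fset (lastM Δ₀ s) ∧ B ∈ Fset (lastM Δ₀ t) ∧
    ∃ u, ChainB B u s ∧ ChainB B u t

variable {Δ₀}

lemma RB_refl {B : Finset Ag} {s : Node Ag P p₀} (h : B ∈ Fset (lastM Δ₀ s)) :
    RB Δ₀ B s s := ⟨h, h, s, ChainB.refl s, ChainB.refl s⟩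

lemma RB_symm {B : Finset Ag} {s t : Node Ag P p₀} (h : RB Δ₀ B s t) : RB Δ₀ B t s :=
  ⟨h.2.1, h.1, h.2.2.imp (fun u hu => ⟨hu.2, hu.1⟩)⟩

lemma RB_trans {B : Finset Ag} {s t r : Node Ag P p₀} (h1 : RB Δ₀ B s t)
    (h2 : RB Δ₀ B t r) : RB Δ₀ B s r := by
  obtain ⟨hs, ht, u₁, c1s, c1t⟩ := h1
  obtain ⟨-, hr, u₂, c2t, c2r⟩ := h2
  refine ⟨hs, hr, ?_⟩
  rcases anc_comparable (anc_of_chain c1t) (anc_of_chain c2t) with h | h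
  · -- u₁ above u₂
    have hpre : ChainB B u₁ u₂ := chainB_prefix c1t (anc_of_chain c2t) h
    exact ⟨u₁, c1s, chainB_trans hpre c2r⟩
  · have hpre : ChainB B u₂ u₁ := chainB_prefix c2t (anc_of_chain c1t) h
    exact ⟨u₂, chainB_trans hpre c1s, c2r⟩

lemma RB_mono {B B' : Finset Ag} (hne : B' ≠ ∅) (hsub : B' ⊆ B) {s t : Node Ag P p₀}
    (h : RB Δ₀ B s t) : RB Δ₀ B' s t := by
  obtain ⟨hs, ht, u, c1, c2⟩ := h
  exact ⟨Fset_downward hs hne hsub, Fset_downward ht hne hsub, u,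
    chainB_mono hsub c1, chainB_mono hsub c2⟩

/-! ### Chains compose to the canonical relation -/

lemma chain_rel0 {G : Pat Ag} (hne : G.1.Nonempty) :
    ∀ {s : Node Ag P p₀} {u : Node Ag P p₀}, ValidN Δ₀ s →
      (∀ B ∈ G.1, ChainB B u s) →
      s = u ∨ rel0 G (lastM Δ₀ u) (lastM Δ₀ s) := by
  intro s
  induction s with
  | root =>
    intro u _ hch
    obtain ⟨B₀, hB₀⟩ := hne
    cases hch B₀ hB₀
    exact Or.inl rfl
  | child s0 H Θ ih =>
    intro u hv hch
    classical
    by_cases hEq : Node.child s0 H Θ = u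
    · exact Or.inl hEq
    · have hsteps : ∀ B ∈ G.1, ChainB B u s0 ∧ covP H B := by
        intro B hB
        cases hch B hB with
        | refl => exact absurd rfl hEq
        | step h hc => exact ⟨h, hc⟩
      have hcov : Covers H G := fun B hB => (hsteps B hB).2
      have hedge : rel0 G (lastM Δ₀ s0) Θ := rel0_of_covers hcov hv.2
      rcases ih hv.1 (fun B hB => (hsteps B hB).1) with h | h
      · right
        rw [← h]
        exact hedge
      · exact Or.inr (rel0_trans h hedge)

lemma alive_pat_mem {Δ : MCSet Ag P p₀} {G : Pat Ag} (h : ∀ B ∈ G.1, B ∈ Fset Δ) :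
    aliveF p₀ G ∈ Δ.1 :=
  alive_union_mem (Δ := Δ) G.1 G.2 (fun B hB _ => (mem_Fset.mp (h B hB)).2)

lemma RB_all_rel0 {G : Pat Ag} (hne : G.1.Nonempty) {s t : Node Ag P p₀}
    (hvs : ValidN Δ₀ s) (hvt : ValidN Δ₀ t) (h : ∀ B ∈ G.1, RB Δ₀ B s t) :
    rel0 G (lastM Δ₀ s) (lastM Δ₀ t) := by
  set m := meetN s t with hm
  have hch : ∀ B ∈ G.1, ChainB B m s ∧ ChainB B m t := by
    intro B hB
    obtain ⟨-, -, u, c1, c2⟩ := h B hB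
    have hanc : Anc u m := anc_meetN (anc_of_chain c1) (anc_of_chain c2)
    exact ⟨chainB_suffix c1 (meetN_anc_left s t) hanc,
      chainB_suffix c2 (meetN_anc_right s t) hanc⟩
  have hAliveS : aliveF p₀ G ∈ (lastM Δ₀ s).1 :=
    alive_pat_mem (fun B hB => (h B hB).1)
  rcases chain_rel0 hne hvs (fun B hB => (hch B hB).1) with h1 | h1 <;>
  rcases chain_rel0 hne hvt (fun B hB => (hch B hB).2) with h2 | h2
  · rw [h1, h2]
    exact rel0_refl (by rw [← h1]; exact hAliveS)
  · rw [h1]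
    exact h2
  · rw [h2]
    exact rel0_symm h1
  · exact rel0_trans (rel0_symm h1) h2

/-! ### The empty pattern connects everything -/

def patE : Pat Ag := ⟨∅, Finset.notMem_empty _⟩

lemma valid_rel0_empty {s : Node Ag P p₀} (hv : ValidN Δ₀ s) :
    rel0 (patE) Δ₀ (lastM Δ₀ s) := by
  induction s with
  | root => exact rel0_refl (mem_of_prov Δ₀.2 (prov_alive_empty _))
  | child s0 H Θ ih =>
    exact rel0_trans (ih hv.1) (rel0_mono (Finset.empty_subset _) hv.2)

lemma rel0_empty_any {s t : Node Ag P p₀} (hvs : ValidN Δ₀ s) (hvt : ValidN Δ₀ t) :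
    rel0 (patE) (lastM Δ₀ s) (lastM Δ₀ t) :=
  rel0_trans (rel0_symm (valid_rel0_empty hvs)) (valid_rel0_empty hvt)

end SynProof

namespace SynProof
open Form

variable {Ag P : Type} [DecidableEq Ag] [Fintype Ag] {p₀ : P}

def WN (Δ₀ : MCSet Ag P p₀) : Type := {s : Node Ag P p₀ // ValidN Δ₀ s}

variable {Δ₀ : MCSet Ag P p₀}

def nrel (Δ₀ : MCSet Ag P p₀) (G : Pat Ag) (s t : WN Δ₀) : Prop :=
  ∀ B ∈ G.1, RB Δ₀ B s.1 t.1

def eqvN (Δ₀ : MCSet Ag P p₀) (s t : WN Δ₀) : Prop :=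
  Fset (lastM Δ₀ s.1) = Fset (lastM Δ₀ t.1) ∧
    ∀ B ∈ Fset (lastM Δ₀ s.1), RB Δ₀ B s.1 t.1

lemma eqvN_refl (s : WN Δ₀) : eqvN Δ₀ s s :=
  ⟨rfl, fun _ hB => RB_refl hB⟩

lemma eqvN_symm {s t : WN Δ₀} (h : eqvN Δ₀ s t) : eqvN Δ₀ t s :=
  ⟨h.1.symm, fun B hB => RB_symm (h.2 B (h.1 ▸ hB))⟩

lemma eqvN_trans {s t r : WN Δ₀} (h1 : eqvN Δ₀ s t) (h2 : eqvN Δ₀ t r) : eqvN Δ₀ s r :=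
  ⟨h1.1.trans h2.1, fun B hB => RB_trans (h1.2 B hB) (h2.2 B (h1.1 ▸ hB))⟩

lemma eqvN_lastM {s t : WN Δ₀} (h : eqvN Δ₀ s t) : lastM Δ₀ s.1 = lastM Δ₀ t.1 := by
  classical
  by_cases hE : Fset (lastM Δ₀ s.1) = ∅
  · have hFp : Fpat (lastM Δ₀ s.1) = patE := Subtype.ext hE
    refine P_lemma ?_ (by rw [← h.1])
    rw [hFp]
    exact rel0_empty_any s.2 t.2
  · have hne : (Fpat (lastM Δ₀ s.1)).1.Nonempty := Finset.nonempty_iff_ne_empty.mpr hE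
    refine P_lemma (RB_all_rel0 hne s.2 t.2 h.2) (by rw [← h.1])

lemma nrel_congr {s s' t t' : WN Δ₀} (hs : eqvN Δ₀ s s') (ht : eqvN Δ₀ t t')
    (G : Pat Ag) (h : nrel Δ₀ G s t) : nrel Δ₀ G s' t' := by
  intro B hB
  have hst := h B hB
  have h1 : RB Δ₀ B s'.1 s.1 := RB_symm (hs.2 B hst.1)
  have h2 : RB Δ₀ B t.1 t'.1 := ht.2 B hst.2.1
  exact RB_trans (RB_trans h1 hst) h2

def sdN (Δ₀ : MCSet Ag P p₀) : Setoid (WN Δ₀) :=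
  ⟨eqvN Δ₀, ⟨eqvN_refl, eqvN_symm, eqvN_trans⟩⟩

def WQ (Δ₀ : MCSet Ag P p₀) : Type := Quotient (sdN Δ₀)

noncomputable def CM (Δ₀ : MCSet Ag P p₀) : PreModel Ag (WQ Δ₀) P where
  rel G := Quotient.lift₂ (fun s t => nrel Δ₀ G s t)
    (fun _ _ _ _ ha hb => propext ⟨nrel_congr ha hb G, nrel_congr (eqvN_symm ha) (eqvN_symm hb) G⟩)
  symm G := by
    intro a b
    induction a using Quotient.ind
    induction b using Quotient.ind
    exact fun h B hB => RB_symm (h B hB)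
  trans G := by
    intro a b c
    induction a using Quotient.ind
    induction b using Quotient.ind
    induction c using Quotient.ind
    exact fun h1 h2 B hB => RB_trans (h1 B hB) (h2 B hB)
  val := Quotient.lift (fun s => {p : P | Form.atom p ∈ (lastM Δ₀ s.1).1})
    (fun a b hab => by
      have h := eqvN_lastM (Δ₀ := Δ₀) hab
      simp only [h])

lemma truthL (φ : Form Ag P) : ∀ (s : WN Δ₀),
    KSat (CM Δ₀) φ (Quotient.mk (sdN Δ₀) s) ↔ φ ∈ (lastM Δ₀ s.1).1 := by
  induction φ with
  | atom p => exact fun s => Iff.rfl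
  | neg φ ih =>
    intro s
    simp only [KSat]
    rw [ih s, neg_mem_iff (lastM Δ₀ s.1).2]
  | and φ ψ ihφ ihψ =>
    intro s
    simp only [KSat]
    rw [ihφ s, ihψ s, and_mem_iff (lastM Δ₀ s.1).2]
  | box G φ ih =>
    intro s
    constructor
    · intro hK
      by_contra hbox
      obtain ⟨Θ, hrel, hφ⟩ := exists_rel0 (lastM Δ₀ s.1) G φ hbox
      have hvt : ValidN Δ₀ (Node.child s.1 G Θ) := ⟨s.2, hrel⟩
      set t : WN Δ₀ := ⟨Node.child s.1 G Θ, hvt⟩ with ht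
      have hnrel : nrel Δ₀ G s t := by
        intro B hB
        have hneB : B ≠ ∅ := fun he => G.2 (he ▸ hB)
        have hsub : (Pat.single B hneB).1 ⊆ G.1 := by
          intro x hx
          simp only [Pat.single, Finset.mem_singleton] at hx
          exact hx ▸ hB
        have h1 : rel0 (Pat.single B hneB) (lastM Δ₀ s.1) Θ := rel0_mono hsub hrel
        refine ⟨mem_Fset.mpr ⟨hneB, rel0_alive h1⟩,
          mem_Fset.mpr ⟨hneB, rel0_alive (rel0_symm h1)⟩, s.1, ChainB.refl _, ?_⟩
        exact ChainB.step (ChainB.refl _) ⟨B, hB, subset_refl B⟩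
      have hKt := hK (Quotient.mk (sdN Δ₀) t) hnrel
      rw [ih t] at hKt
      exact hφ hKt
    · intro hbox v hrel
      obtain ⟨t, rfl⟩ := Quotient.exists_rep v
      rw [ih t]
      have hnrel : nrel Δ₀ G s t := hrel
      classical
      by_cases hGe : G.1 = (∅ : Finset (Finset Ag))
      · have hGE : G = patE := Subtype.ext hGe
        subst hGE
        exact rel0_empty_any s.2 t.2 φ hbox
      · have hne : G.1.Nonempty := Finset.nonempty_iff_ne_empty.mpr hGe
        exact RB_all_rel0 hne s.2 t.2 hnrel φ hbox

lemma isDelta_CM (Δ₀ : MCSet Ag P p₀) : IsDelta (CM Δ₀) := by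
  constructor
  · -- k2
    intro G A B hAB w
    induction w using Quotient.ind
    intro hA hB hrel
    have hAF := (hrel A hA).1
    have hBF := (hrel B hB).1
    have hU := Fset_union_mem hAF hBF
    intro B' hB'
    simp only [Pat.single, Finset.mem_singleton] at hB'
    subst hB'
    exact RB_refl hU
  · -- k3
    intro G H hsub w v
    induction w using Quotient.ind
    induction v using Quotient.ind
    exact fun h B hB => h B (hsub hB)
  · -- k4
    intro G B hB hex w v
    induction w using Quotient.ind
    induction v using Quotient.ind
    intro h B' hB'
    simp only [Pat.ins, Finset.mem_insert] at hB'
    rcases hB' with rfl | hB'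
    · obtain ⟨A, hA, hBA⟩ := hex
      exact RB_mono hB hBA (h A hA)
    · exact h B' hB'
  · -- ne
    intro w
    induction w using Quotient.ind
    exact ⟨patE, fun B hB => absurd hB (Finset.notMem_empty B)⟩
  · -- d
    intro G w v
    induction w using Quotient.ind
    induction v using Quotient.ind
    constructor
    · intro h B hB B' hB'
      simp only [Pat.single, Finset.mem_singleton] at hB'
      subst hB'
      exact h B' hB
    · intro h B hB
      exact h B hB B (by simp [Pat.single])

lemma wbar_CM (s : WN Δ₀) :
    wbar (CM Δ₀) (Quotient.mk (sdN Δ₀) s) = Fpat (lastM Δ₀ s.1) := by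
  classical
  apply Subtype.ext
  apply Finset.ext
  intro B
  show B ∈ (wbar (CM Δ₀) (Quotient.mk (sdN Δ₀) s)).1 ↔ B ∈ Fset (lastM Δ₀ s.1)
  unfold wbar
  rw [Finset.mem_filter]
  simp only [Finset.mem_univ, true_and]
  constructor
  · rintro ⟨G, hB, hrel⟩
    have h : nrel Δ₀ G s s := hrel
    exact (h B hB).1
  · intro hB
    have hne : B ≠ ∅ := (mem_Fset.mp hB).fst
    refine ⟨Pat.single B hne, by simp [Pat.single], ?_⟩
    show nrel Δ₀ (Pat.single B hne) s s
    intro B' hB'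
    simp only [Pat.single, Finset.mem_singleton] at hB'
    subst hB'
    exact RB_refl hB

lemma proper_CM (Δ₀ : MCSet Ag P p₀) : Proper (CM Δ₀) := by
  intro w v hEq
  induction w using Quotient.ind
  induction v using Quotient.ind
  rename_i s t
  obtain ⟨hbar, hrel⟩ := hEq
  rw [wbar_CM, wbar_CM] at hbar
  rw [wbar_CM] at hrel
  have hFs : Fset (lastM Δ₀ s.1) = Fset (lastM Δ₀ t.1) := congrArg Subtype.val hbar
  have hnrel : nrel Δ₀ (Fpat (lastM Δ₀ s.1)) s t := hrel
  exact Quotient.sound ⟨hFs, hnrel⟩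

end SynProof

/-- `Syn` is sound and complete with respect to proper δ-models. -/
theorem syn_sound_complete_proper_delta {Ag P : Type} [DecidableEq Ag] [Fintype Ag]
    (p₀ : P) (φ : Form Ag P) :
    SynD p₀ φ ↔
      ∀ (W : Type) (M : PreModel Ag W P), IsDelta M → Proper M → ∀ w, KSat M φ w := by
  constructor
  · intro h W M hM hP w
    exact SynProof.soundness h M hM hP w
  · intro hval
    by_contra hprov
    obtain ⟨T, hsub, hT⟩ := SynProof.lindenbaum (SynProof.con_singleton_neg hprov)
    set Δ₀ : SynProof.MCSet Ag P p₀ := ⟨T, hT⟩ with hΔ₀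
    have hneg : Form.neg φ ∈ Δ₀.1 := hsub rfl
    have hK := hval (SynProof.WQ Δ₀) (SynProof.CM Δ₀) (SynProof.isDelta_CM Δ₀)
      (SynProof.proper_CM Δ₀)
      (Quotient.mk (SynProof.sdN Δ₀) (⟨SynProof.Node.root, trivial⟩ : SynProof.WN Δ₀))
    replace hK := (SynProof.truthL φ _).mp hK
    exact SynProof.mcs_not_both hT hK hneg
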